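/- Let n ≥ 1 and let S ⊆ ℤ² be finite with |S| = n² and e(S) = 2n(n−1). Then S is a translate of the square {0,…,n−1} × {0,…,n−1}, i.e. S = x + {0,…,n−1}² for some x ∈ ℤ². -/

import Mathlib

open scoped Classical

noncomputable section

/-- Two points of `ℤ²` are adjacent (nearest neighbors, Euclidean distance 1)
if their difference is a unit vector. -/
def planeAdj (u v : ℤ × ℤ) : Prop :=
  u - v = (1, 0) ∨ u - v = (-1, 0) ∨ u - v = (0, 1) ∨ u - v = (0, -1)

/-- `e(S)`: the number of unordered pairs of adjacent points contained in `S`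
(the internal edges of `S`). -/
def planeE (S : Finset (ℤ × ℤ)) : ℕ :=
  ((S ×ˢ S).filter fun p => planeAdj p.1 p.2).card / 2

/-- The square `{0,…,n−1} × {0,…,n−1} ⊆ ℤ²`. -/
def planeSquare (n : ℕ) : Finset (ℤ × ℤ) :=
  (Finset.range n ×ˢ Finset.range n).image fun p => ((p.1 : ℤ), (p.2 : ℤ))

namespace PlaneSquareAux

open Finset

/- ## One-dimensional lemmas -/

lemma oneD_le (T : Finset ℤ) (hT : T.Nonempty) :
    (T.filter fun a => a + 1 ∈ T).card + 1 ≤ T.card := by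
  have h1 : (T.filter fun a => a + 1 ∈ T).card ≤ (T.erase (T.min' hT)).card := by
    apply Finset.card_le_card_of_injOn (fun a => a + 1)
    · intro a ha
      simp only [mem_coe, mem_filter] at ha
      refine Finset.mem_erase.2 ⟨?_, ha.2⟩
      have := T.min'_le a ha.1
      dsimp only; omega
    · intro a _ b _ h; simpa using h
  have h2 : (T.erase (T.min' hT)).card = T.card - 1 :=
    Finset.card_erase_of_mem (T.min'_mem hT)
  have h3 : 1 ≤ T.card := Finset.card_pos.2 hT
  omega

lemma oneD_eq (T : Finset ℤ) (hT : T.Nonempty)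
    (h : (T.filter fun a => a + 1 ∈ T).card + 1 = T.card) :
    T = Finset.Ico (T.min' hT) (T.min' hT + T.card) := by
  set m := T.min' hT with hm
  have hsub : ((T.filter fun a => a + 1 ∈ T).image fun a => a + 1) ⊆ T.erase m := by
    intro b hb
    simp only [mem_image, mem_filter] at hb
    obtain ⟨a, ⟨ha, ha1⟩, rfl⟩ := hb
    refine Finset.mem_erase.2 ⟨?_, ha1⟩
    have := T.min'_le a ha; omega
  have hcard1 : ((T.filter fun a => a + 1 ∈ T).image fun a => a + 1).card
      = (T.filter fun a => a + 1 ∈ T).card :=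
    Finset.card_image_of_injective _ (fun a b hab => by omega)
  have hcard2 : (T.erase m).card = T.card - 1 := Finset.card_erase_of_mem (T.min'_mem hT)
  have heq : ((T.filter fun a => a + 1 ∈ T).image fun a => a + 1) = T.erase m := by
    apply Finset.eq_of_subset_of_card_le hsub
    omega
  have hdown : ∀ b ∈ T, b ≠ m → b - 1 ∈ T := by
    intro b hb hbm
    have : b ∈ T.erase m := Finset.mem_erase.2 ⟨hbm, hb⟩
    rw [← heq] at this
    simp only [mem_image, mem_filter] at this
    obtain ⟨a, ⟨ha, _⟩, rfl⟩ := this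
    simpa using ha
  have hfill : ∀ k : ℕ, ∀ x ∈ T, ∀ y : ℤ, m ≤ y → y ≤ x → x - y = k → y ∈ T := by
    intro k
    induction k with
    | zero => intro x hx y _ _ hk; have : y = x := by omega
              rwa [this]
    | succ k ih =>
      intro x hx y hy1 hy2 hk
      have hxm : x ≠ m := by
        have := T.min'_le x hx; omega
      have hx1 : x - 1 ∈ T := hdown x hx hxm
      exact ih (x - 1) hx1 y hy1 (by omega) (by omega)
  set M := T.max' hT with hM
  have hIcc : T = Finset.Icc m M := by
    apply Finset.Subset.antisymm
    · intro x hx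
      exact Finset.mem_Icc.2 ⟨T.min'_le x hx, T.le_max' x hx⟩
    · intro x hx
      rw [Finset.mem_Icc] at hx
      exact hfill (M - x).toNat M (T.max'_mem hT) x hx.1 hx.2 (by omega)
  have hcardT : T.card = (M + 1 - m).toNat := by
    rw [hIcc, Int.card_Icc]
  have hmM : m ≤ M := T.min'_le M (T.max'_mem hT)
  have hc2 : (#(Finset.Icc m M) : ℤ) = M + 1 - m := by
    rw [Int.card_Icc]; omega
  rw [hIcc]
  ext x
  simp only [Finset.mem_Icc, Finset.mem_Ico]
  omega

/- ## Horizontal/vertical edge counts -/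

noncomputable def hEdges (S : Finset (ℤ × ℤ)) : ℕ :=
  (S.filter fun u => u + ((1:ℤ), (0:ℤ)) ∈ S).card

noncomputable def vEdges (S : Finset (ℤ × ℤ)) : ℕ :=
  (S.filter fun u => u + ((0:ℤ), (1:ℤ)) ∈ S).card

lemma pairs_card (S : Finset (ℤ × ℤ)) (d : ℤ × ℤ) :
    ((S ×ˢ S).filter fun p => p.1 - p.2 = d).card
      = (S.filter fun u => u + d ∈ S).card := by
  apply Finset.card_bij (fun p _ => p.2)
  · intro p hp
    simp only [mem_filter, mem_product] at hp ⊢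
    refine ⟨hp.1.2, ?_⟩
    have h1 : p.1 = d + p.2 := eq_add_of_sub_eq hp.2
    rw [add_comm, ← h1]; exact hp.1.1
  · intro p hp q hq hpq
    simp only [mem_filter, mem_product] at hp hq
    have h1 : p.1 = d + p.2 := eq_add_of_sub_eq hp.2
    have h2 : q.1 = d + q.2 := eq_add_of_sub_eq hq.2
    have : p.1 = q.1 := by rw [h1, h2, hpq]
    exact Prod.ext this hpq
  · intro u hu
    simp only [mem_filter] at hu
    refine ⟨(u + d, u), ?_, rfl⟩
    simp only [mem_filter, mem_product]
    exact ⟨⟨hu.2, hu.1⟩, by rw [add_sub_cancel_left]⟩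

lemma pairs_swap (S : Finset (ℤ × ℤ)) (d : ℤ × ℤ) :
    ((S ×ˢ S).filter fun p => p.1 - p.2 = d).card
      = ((S ×ˢ S).filter fun p => p.1 - p.2 = -d).card := by
  apply Finset.card_bij (fun p _ => p.swap)
  · intro p hp
    simp only [mem_filter, mem_product, Prod.fst_swap, Prod.snd_swap] at hp ⊢
    exact ⟨⟨hp.1.2, hp.1.1⟩, by rw [← hp.2, neg_sub]⟩
  · intro p _ q _ hpq
    exact Prod.swap_injective hpq
  · intro q hq
    simp only [mem_filter, mem_product] at hq
    refine ⟨q.swap, ?_, by simp⟩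
    simp only [mem_filter, mem_product, Prod.fst_swap, Prod.snd_swap]
    exact ⟨⟨hq.1.2, hq.1.1⟩, by rw [← neg_sub, hq.2, neg_neg]⟩

lemma pairs_disj (S : Finset (ℤ × ℤ)) {d d' : ℤ × ℤ} (h : d ≠ d') :
    Disjoint ((S ×ˢ S).filter fun p => p.1 - p.2 = d)
      ((S ×ˢ S).filter fun p => p.1 - p.2 = d') := by
  simp only [Finset.disjoint_left, mem_filter]
  rintro p ⟨_, h1⟩ ⟨_, h2⟩
  exact h (h1 ▸ h2 ▸ rfl)

lemma planeE_eq (S : Finset (ℤ × ℤ)) : planeE S = hEdges S + vEdges S := by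
  unfold planeE
  have key : ((S ×ˢ S).filter fun p => planeAdj p.1 p.2).card
      = 2 * (hEdges S + vEdges S) := by
    have hsplit : ((S ×ˢ S).filter fun p => planeAdj p.1 p.2)
        = (((S ×ˢ S).filter fun p => p.1 - p.2 = (1, 0))
          ∪ ((S ×ˢ S).filter fun p => p.1 - p.2 = (-1, 0)))
          ∪ (((S ×ˢ S).filter fun p => p.1 - p.2 = (0, 1))
          ∪ ((S ×ˢ S).filter fun p => p.1 - p.2 = (0, -1))) := by
      ext p
      rw [mem_filter]; simp only [mem_union, mem_filter, planeAdj]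
      tauto
    have d12 := pairs_disj S (d := ((1:ℤ),(0:ℤ))) (d' := (-1,0)) (by decide)
    have d34 := pairs_disj S (d := ((0:ℤ),(1:ℤ))) (d' := (0,-1)) (by decide)
    have d13 := pairs_disj S (d := ((1:ℤ),(0:ℤ))) (d' := (0,1)) (by decide)
    have d14 := pairs_disj S (d := ((1:ℤ),(0:ℤ))) (d' := (0,-1)) (by decide)
    have d23 := pairs_disj S (d := ((-1:ℤ),(0:ℤ))) (d' := (0,1)) (by decide)
    have d24 := pairs_disj S (d := ((-1:ℤ),(0:ℤ))) (d' := (0,-1)) (by decide)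
    rw [hsplit, Finset.card_union_of_disjoint
        (Finset.disjoint_union_right.2 ⟨Finset.disjoint_union_left.2 ⟨d13, d23⟩,
          Finset.disjoint_union_left.2 ⟨d14, d24⟩⟩),
      Finset.card_union_of_disjoint d12, Finset.card_union_of_disjoint d34]
    have e1 := pairs_card S (1, 0)
    have e2 := pairs_swap S (1, 0)
    have e3 := pairs_card S (0, 1)
    have e4 := pairs_swap S (0, 1)
    have hneg1 : -((1:ℤ), (0:ℤ)) = (-1, 0) := by decide
    have hneg2 : -((0:ℤ), (1:ℤ)) = (0, -1) := by decide
    rw [hneg1] at e2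
    rw [hneg2] at e4
    unfold hEdges vEdges
    omega
  rw [key]; omega

/- ## Rows and fiberwise decompositions -/

def rowOf (S : Finset (ℤ × ℤ)) (c : ℤ) : Finset ℤ :=
  (S.filter fun p => p.2 = c).image Prod.fst

lemma mem_rowOf {S : Finset (ℤ × ℤ)} {c a : ℤ} : a ∈ rowOf S c ↔ (a, c) ∈ S := by
  simp only [rowOf, mem_image, mem_filter]
  constructor
  · rintro ⟨p, ⟨hp, h2⟩, h1⟩
    have : p = (a, c) := by rw [← h1, ← h2]
    rwa [← this]
  · intro h
    exact ⟨(a, c), ⟨h, rfl⟩, rfl⟩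

lemma card_fiberwise (S : Finset (ℤ × ℤ)) :
    S.card = ∑ c ∈ S.image Prod.snd, (rowOf S c).card := by
  rw [Finset.card_eq_sum_card_fiberwise (f := Prod.snd) (t := S.image Prod.snd)
    (fun p hp => Finset.mem_image_of_mem _ hp)]
  apply Finset.sum_congr rfl
  intro c _
  unfold rowOf
  rw [Finset.card_image_of_injOn]
  intro p hp q hq hpq
  simp only [Finset.mem_coe, mem_filter] at hp hq
  exact Prod.ext hpq (hp.2.trans hq.2.symm)

lemma hEdges_fiberwise (S : Finset (ℤ × ℤ)) :
    hEdges S = ∑ c ∈ S.image Prod.snd,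
      ((rowOf S c).filter fun a => a + 1 ∈ rowOf S c).card := by
  unfold hEdges
  rw [Finset.card_eq_sum_card_fiberwise (f := Prod.snd) (t := S.image Prod.snd)
    (fun p hp => Finset.mem_image_of_mem _ (Finset.mem_of_mem_filter _ hp))]
  apply Finset.sum_congr rfl
  intro c _
  apply Finset.card_bij (fun p _ => p.1)
  · intro p hp
    simp only [mem_filter] at hp ⊢
    obtain ⟨⟨hpS, hp1⟩, hp2⟩ := hp
    have hp' : p = (p.1, c) := Prod.ext rfl hp2
    constructor
    · rw [mem_rowOf, ← hp']; exact hpS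
    · rw [mem_rowOf]
      have : p + ((1:ℤ), (0:ℤ)) = (p.1 + 1, c) := by
        rw [Prod.ext_iff]; simp [hp2]
      rwa [this] at hp1
  · intro p hp q hq hpq
    simp only [mem_filter] at hp hq
    exact Prod.ext hpq (hp.2.trans hq.2.symm)
  · intro a ha
    simp only [mem_filter, mem_rowOf] at ha
    refine ⟨(a, c), ?_, rfl⟩
    simp only [mem_filter]
    refine ⟨⟨ha.1, ?_⟩, by simp⟩
    have : (a, c) + ((1:ℤ), (0:ℤ)) = (a + 1, c) := by rw [Prod.ext_iff]; simp
    rw [this]; exact ha.2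

/- ## Swap symmetry -/

lemma mem_swap {S : Finset (ℤ × ℤ)} {p : ℤ × ℤ} :
    p ∈ S.image Prod.swap ↔ p.swap ∈ S := by
  simp only [mem_image]
  constructor
  · rintro ⟨q, hq, rfl⟩; simpa using hq
  · intro h; exact ⟨p.swap, h, by simp⟩

lemma card_swap (S : Finset (ℤ × ℤ)) : (S.image Prod.swap).card = S.card :=
  Finset.card_image_of_injective _ Prod.swap_injective

lemma hEdges_swap (S : Finset (ℤ × ℤ)) : hEdges (S.image Prod.swap) = vEdges S := by
  unfold hEdges vEdges
  apply Finset.card_bij (fun p _ => p.swap)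
  · intro p hp
    simp only [mem_filter, mem_swap] at hp ⊢
    refine ⟨hp.1, ?_⟩
    have h2 := hp.2
    have : (p + ((1:ℤ), (0:ℤ))).swap = p.swap + ((0:ℤ), (1:ℤ)) := by
      simp [Prod.ext_iff]
    rwa [this] at h2
  · intro p _ q _ h; exact Prod.swap_injective h
  · intro u hu
    simp only [mem_filter] at hu
    refine ⟨u.swap, ?_, by simp⟩
    simp only [mem_filter, mem_swap, Prod.swap_swap]
    refine ⟨hu.1, ?_⟩
    have : (u.swap + ((1:ℤ), (0:ℤ))).swap = u + ((0:ℤ), (1:ℤ)) := by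
      simp [Prod.ext_iff]
    rw [this]; exact hu.2

lemma image_snd_swap (S : Finset (ℤ × ℤ)) :
    (S.image Prod.swap).image Prod.snd = S.image Prod.fst := by
  rw [Finset.image_image]; rfl

/- ## The translated square -/

lemma square_translate (n : ℕ) (a b : ℤ) :
    (planeSquare n).image ((((a, b) : ℤ × ℤ)) + ·)
      = Finset.Ico a (a + n) ×ˢ Finset.Ico b (b + n) := by
  ext p
  constructor
  · intro hp
    rw [Finset.mem_image] at hp
    obtain ⟨q, hq, rfl⟩ := hp
    rw [planeSquare, Finset.mem_image] at hq
    obtain ⟨r, hr, rfl⟩ := hq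
    rw [Finset.mem_product, Finset.mem_range, Finset.mem_range] at hr
    simp only [Finset.mem_product, Finset.mem_Ico, Prod.fst_add, Prod.snd_add]
    omega
  · intro hp
    rw [Finset.mem_product, Finset.mem_Ico, Finset.mem_Ico] at hp
    rw [Finset.mem_image]
    refine ⟨((p.1 - a), (p.2 - b)), ?_, by simp [Prod.ext_iff]⟩
    rw [planeSquare, Finset.mem_image]
    refine ⟨((p.1 - a).toNat, (p.2 - b).toNat), ?_, ?_⟩
    · rw [Finset.mem_product, Finset.mem_range, Finset.mem_range]
      constructor <;> omega
    · simp only [Prod.ext_iff]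
      constructor <;> simp <;> omega

/- ## Row structure extraction: from the count bounds, one side -/

lemma side_bound (S : Finset (ℤ × ℤ)) :
    hEdges S + (S.image Prod.snd).card ≤ S.card := by
  have hle : ∀ c ∈ S.image Prod.snd,
      ((rowOf S c).filter fun a => a + 1 ∈ rowOf S c).card + 1 ≤ (rowOf S c).card := by
    intro c hc
    apply oneD_le
    rw [Finset.mem_image] at hc
    obtain ⟨p, hp, rfl⟩ := hc
    exact ⟨p.1, mem_rowOf.2 (by rwa [show (p.1, p.2) = p from rfl])⟩
  have := Finset.sum_le_sum hle
  rw [Finset.sum_add_distrib, Finset.sum_const, smul_eq_mul, mul_one] at this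
  rw [hEdges_fiberwise, card_fiberwise S]
  exact this

lemma side_eq (S : Finset (ℤ × ℤ))
    (h : hEdges S + (S.image Prod.snd).card = S.card) :
    ∀ c ∈ S.image Prod.snd,
      ((rowOf S c).filter fun a => a + 1 ∈ rowOf S c).card + 1 = (rowOf S c).card := by
  have hle : ∀ c ∈ S.image Prod.snd,
      ((rowOf S c).filter fun a => a + 1 ∈ rowOf S c).card + 1 ≤ (rowOf S c).card := by
    intro c hc
    apply oneD_le
    rw [Finset.mem_image] at hc
    obtain ⟨p, hp, rfl⟩ := hc
    exact ⟨p.1, mem_rowOf.2 (by rwa [show (p.1, p.2) = p from rfl])⟩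
  have hsum : (∑ c ∈ S.image Prod.snd,
      (((rowOf S c).filter fun a => a + 1 ∈ rowOf S c).card + 1))
      = ∑ c ∈ S.image Prod.snd, (rowOf S c).card := by
    rw [Finset.sum_add_distrib, Finset.sum_const, smul_eq_mul, mul_one,
      ← hEdges_fiberwise, ← card_fiberwise]
    exact h
  exact fun c hc => (Finset.sum_eq_sum_iff_of_le hle).1 hsum c hc

end PlaneSquareAux

open PlaneSquareAux Finset

/-- a set of `n²` points of `ℤ²` with exactly `2n(n−1)` internal edges
is a translate `x + {0,…,n−1}²` of the square. -/
theorem plane_square_unique (n : ℕ) (hn : 1 ≤ n) (S : Finset (ℤ × ℤ))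
    (hS : S.card = n ^ 2) (hE : planeE S = 2 * n * (n - 1)) :
    ∃ x : ℤ × ℤ, S = (planeSquare n).image (x + ·) := by
  classical
  obtain ⟨m, rfl⟩ : ∃ m, n = m + 1 := ⟨n - 1, by omega⟩
  set R := S.image Prod.fst with hRdef
  set C := S.image Prod.snd with hCdef
  set T := S.image Prod.swap with hTdef
  have hTcard : T.card = (m + 1) ^ 2 := by rw [hTdef, card_swap, hS]
  have hTsnd : T.image Prod.snd = R := by rw [hTdef, image_snd_swap]
  -- the two side bounds
  have h1 : hEdges S + C.card ≤ (m + 1) ^ 2 := by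
    have := side_bound S; rwa [hS] at this
  have h2 : vEdges S + R.card ≤ (m + 1) ^ 2 := by
    have := side_bound T
    rwa [hTcard, hTsnd, hEdges_swap] at this
  -- product bound
  have hsubRC : S ⊆ R ×ˢ C := fun p hp =>
    Finset.mem_product.2 ⟨Finset.mem_image_of_mem _ hp, Finset.mem_image_of_mem _ hp⟩
  have hprod : (m + 1) ^ 2 ≤ R.card * C.card := by
    calc (m + 1) ^ 2 = S.card := hS.symm
    _ ≤ (R ×ˢ C).card := Finset.card_le_card hsubRC
    _ = R.card * C.card := Finset.card_product _ _
  have hEsum : hEdges S + vEdges S = 2 * (m + 1) * m := by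
    rw [← planeE_eq, hE]; norm_num
  -- extract R.card = C.card = m+1
  have hRC : R.card = m + 1 ∧ C.card = m + 1 := by
    have zh1 : (hEdges S : ℤ) + C.card ≤ ((m : ℤ) + 1) ^ 2 := by exact_mod_cast h1
    have zh2 : (vEdges S : ℤ) + R.card ≤ ((m : ℤ) + 1) ^ 2 := by exact_mod_cast h2
    have zhp : ((m : ℤ) + 1) ^ 2 ≤ (R.card : ℤ) * C.card := by exact_mod_cast hprod
    have zhe : (hEdges S : ℤ) + vEdges S = 2 * ((m : ℤ) + 1) * m := by exact_mod_cast hEsum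
    have hsum : (R.card : ℤ) + C.card ≤ 2 * ((m : ℤ) + 1) := by nlinarith
    have hr0 : (0 : ℤ) ≤ R.card := Int.natCast_nonneg _
    have hc0 : (0 : ℤ) ≤ C.card := Int.natCast_nonneg _
    have hkey : ((R.card : ℤ) - (m + 1)) ^ 2 ≤ 0 := by nlinarith
    have hkey2 : ((C.card : ℤ) - (m + 1)) ^ 2 ≤ 0 := by nlinarith
    have e1 : ((R.card : ℤ) - (m + 1)) = 0 := by
      have := sq_nonneg ((R.card : ℤ) - (m + 1))
      have h0 : ((R.card : ℤ) - (m + 1)) ^ 2 = 0 := le_antisymm hkey this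
      exact pow_eq_zero_iff (two_ne_zero) |>.1 h0
    have e2 : ((C.card : ℤ) - (m + 1)) = 0 := by
      have := sq_nonneg ((C.card : ℤ) - (m + 1))
      have h0 : ((C.card : ℤ) - (m + 1)) ^ 2 = 0 := le_antisymm hkey2 this
      exact pow_eq_zero_iff (two_ne_zero) |>.1 h0
    constructor <;> omega
  obtain ⟨hRcard, hCcard⟩ := hRC
  -- equalities in the side bounds
  obtain ⟨K, hK⟩ : ∃ K, (m + 1) ^ 2 = K := ⟨_, rfl⟩
  have hexp : 2 * (m + 1) * m + 2 * (m + 1) = 2 * K := by rw [← hK]; ring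
  have h1e : hEdges S + C.card = S.card := by
    rw [hS, hK]; rw [hK] at h1 h2; omega
  have h2e : hEdges T + (T.image Prod.snd).card = T.card := by
    rw [hTcard, hTsnd, hEdges_swap, hRcard, hK]; rw [hK] at h1 h2; omega
  -- rows and columns are intervals
  have hrowsS := side_eq S (by rwa [← hCdef])
  have hrowsT := side_eq T h2e
  -- S is a product
  have hSRC : S = R ×ˢ C := by
    apply Finset.eq_of_subset_of_card_le hsubRC
    rw [Finset.card_product, hRcard, hCcard, hS]
    exact le_of_eq (by ring)
  -- choose base points
  have hSne : S.Nonempty := by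
    rw [← Finset.card_pos, hS]; positivity
  obtain ⟨p0, hp0⟩ := hSne
  have hc0 : p0.2 ∈ C := Finset.mem_image_of_mem _ hp0
  have hr0 : p0.1 ∈ R := Finset.mem_image_of_mem _ hp0
  -- the row at p0.2 is R
  have hrowR : rowOf S p0.2 = R := by
    ext a
    rw [mem_rowOf]
    constructor
    · intro h
      exact Finset.mem_image_of_mem _ h
    · intro h
      rw [hSRC]
      exact Finset.mem_product.2 ⟨h, hc0⟩
  have hrowC : rowOf T p0.1 = C := by
    ext a
    rw [mem_rowOf, hTdef, mem_swap]
    constructor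
    · intro h
      exact Finset.mem_image_of_mem Prod.snd h
    · intro h
      show (p0.1, a) ∈ S
      rw [hSRC]
      exact Finset.mem_product.2 ⟨hr0, h⟩
  -- interval structure
  have hRne : R.Nonempty := ⟨p0.1, hr0⟩
  have hCne : C.Nonempty := ⟨p0.2, hc0⟩
  have hRint : R = Finset.Ico (R.min' hRne) (R.min' hRne + (m + 1)) := by
    have h := hrowsS p0.2 hc0
    rw [hrowR] at h
    have := oneD_eq R hRne h
    rw [hRcard] at this
    exact this
  have hCint : C = Finset.Ico (C.min' hCne) (C.min' hCne + (m + 1)) := by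
    have h := hrowsT p0.1 (by rw [hTsnd]; exact hr0)
    rw [hrowC] at h
    have := oneD_eq C hCne h
    rw [hCcard] at this
    exact this
  refine ⟨(R.min' hRne, C.min' hCne), ?_⟩
  rw [square_translate, hSRC]
  push_cast
  rw [← hRint, ← hCint]
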